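/- Let (u_n, u*_n), n ≥ 0, satisfy α d_τ u_n − d* u_n* = −β u_n and γ d_τ u_n* + d u_n = 0 for n ≥ 1, and define w_n = w₀ + τ Σ_{k=1}^n u_k, w_n* = w₀* + τ Σ_{k=1}^n u_k*, where (w₀, w₀*) solves β w₀ − d* w₀* = −α u₀ and d w₀ = −γ u₀*. Then α d_τ w_n − d* w_n* = −β w_n and γ d_τ w_n* + d w_n = 0 for all n ≥ 1. -/

import Mathlib

open scoped RealInnerProductSpace

/-- The discrete primitives w_n = w₀ + τ Σ_{k=1}^n u_k, w_n* = w₀* + τ Σ_{k=1}^n u_k*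
of a solution of the implicit Euler scheme satisfy the same discrete evolution
equations α d_τ w_n − d* w_n* = −β w_n and γ d_τ w_n* + d w_n = 0 for n ≥ 1. -/
theorem stmt_13
    {W1 W2 : Type*} [NormedAddCommGroup W1] [InnerProductSpace ℝ W1] [CompleteSpace W1]
    [NormedAddCommGroup W2] [InnerProductSpace ℝ W2] [CompleteSpace W2]
    (V1 : Submodule ℝ W1) (V2 : Submodule ℝ W2)
    (d : V1 →ₗ[ℝ] W2) (dstar : V2 →ₗ[ℝ] W1)
    (hadj : ∀ (u : V1) (us : V2), ⟪dstar us, (u : W1)⟫ = ⟪(us : W2), d u⟫)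
    (α β : W1 ≃L[ℝ] W1) (γ : W2 ≃L[ℝ] W2)
    (τ : ℝ) (hτ : 0 < τ)
    (u : ℕ → V1) (us : ℕ → V2)
    (heq1 : ∀ n : ℕ, 1 ≤ n →
      α (τ⁻¹ • ((u n : W1) - (u (n - 1) : W1))) - dstar (us n) = -β ((u n : W1)))
    (heq2 : ∀ n : ℕ, 1 ≤ n →
      γ (τ⁻¹ • ((us n : W2) - (us (n - 1) : W2))) + d (u n) = 0)
    (w0 : V1) (ws0 : V2)
    (hinit1 : β ((w0 : W1)) - dstar ws0 = -α ((u 0 : W1)))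
    (hinit2 : d w0 = -γ ((us 0 : W2)))
    (w : ℕ → V1) (ws : ℕ → V2)
    (hw : ∀ n : ℕ, w n = w0 + τ • ∑ k ∈ Finset.Icc 1 n, u k)
    (hws : ∀ n : ℕ, ws n = ws0 + τ • ∑ k ∈ Finset.Icc 1 n, us k) :
    ∀ n : ℕ, 1 ≤ n →
      α (τ⁻¹ • ((w n : W1) - (w (n - 1) : W1))) - dstar (ws n) = -β ((w n : W1)) ∧
      γ (τ⁻¹ • ((ws n : W2) - (ws (n - 1) : W2))) + d (w n) = 0 := by

  have hτ' : τ ≠ 0 := hτ.ne'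
  -- scaled versions of the evolution equations
  have H1 : ∀ n : ℕ, 1 ≤ n →
      α ((u n : W1)) - α ((u (n-1) : W1)) - τ • dstar (us n) = -(τ • β ((u n : W1))) := by
    intro n hn
    have h := heq1 n hn
    have h' := congrArg (fun x : W1 => τ • x) h
    simpa [map_smul, map_sub, smul_sub, smul_smul, mul_inv_cancel₀ hτ', smul_neg, sub_sub]
      using h'
  have H2 : ∀ n : ℕ, 1 ≤ n →
      γ ((us n : W2)) - γ ((us (n-1) : W2)) + τ • d (u n) = 0 := by
    intro n hn
    have h := heq2 n hn
    have h' := congrArg (fun x : W2 => τ • x) h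
    simpa [map_smul, map_sub, smul_sub, smul_add, smul_smul, mul_inv_cancel₀ hτ'] using h'
  -- step relations for the primitives
  have hwstep : ∀ n : ℕ, w (n+1) = w n + τ • u (n+1) := by
    intro n
    rw [hw, hw, Finset.sum_Icc_succ_top (by omega : 1 ≤ n+1), smul_add]
    abel
  have hwsstep : ∀ n : ℕ, ws (n+1) = ws n + τ • us (n+1) := by
    intro n
    rw [hws, hws, Finset.sum_Icc_succ_top (by omega : 1 ≤ n+1), smul_add]
    abel
  -- the key claim, by induction
  have key : ∀ n : ℕ, 1 ≤ n →
      (α ((u n : W1)) - dstar (ws n) = -β ((w n : W1)) ∧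
       γ ((us n : W2)) + d (w n) = 0) := by
    intro n hn
    induction n, hn using Nat.le_induction with
    | base =>
      have hw1 : w 1 = w0 + τ • u 1 := by rw [hw]; simp [Finset.Icc_self]
      have hws1 : ws 1 = ws0 + τ • us 1 := by rw [hws]; simp [Finset.Icc_self]
      have h1 := H1 1 le_rfl
      have h2 := H2 1 le_rfl
      simp only [Nat.sub_self] at h1 h2
      constructor
      · rw [hws1, hw1, map_add, map_smul]
        push_cast
        rw [map_add, map_smul]
        linear_combination (norm := module) h1 + hinit1
      · rw [hw1, map_add, map_smul]
        linear_combination (norm := module) h2 + hinit2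
    | succ n hn ih =>
      obtain ⟨ih1, ih2⟩ := ih
      have h1 := H1 (n+1) (by omega)
      have h2 := H2 (n+1) (by omega)
      simp only [Nat.add_sub_cancel] at h1 h2
      constructor
      · rw [hwsstep n, hwstep n, map_add, map_smul]
        push_cast
        rw [map_add, map_smul]
        linear_combination (norm := module) h1 + ih1
      · rw [hwstep n, map_add, map_smul]
        linear_combination (norm := module) h2 + ih2
  intro n hn
  obtain ⟨k1, k2⟩ := key n hn
  obtain ⟨m, rfl⟩ := Nat.exists_eq_add_of_le hn
  have hm : 1 + m = m + 1 := by omega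
  rw [hm] at k1 k2 ⊢
  simp only [Nat.add_sub_cancel]
  have hwc : (w (m+1) : W1) - (w m : W1) = τ • (u (m+1) : W1) := by
    rw [hwstep m]; push_cast; abel
  have hwsc : (ws (m+1) : W2) - (ws m : W2) = τ • (us (m+1) : W2) := by
    rw [hwsstep m]; push_cast; abel
  rw [hwc, hwsc]
  simp only [smul_smul, inv_mul_cancel₀ hτ', one_smul]
  exact ⟨k1, k2⟩
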